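/- Let a₁, …, aₙ ∈ ℤⁿ be linearly independent integer vectors and let Ã = [a₁, …, aₙ]ᵀ be the matrix with rows a₁ᵀ, …, aₙᵀ. Then 1/δ̂({a₁,…,a_{n−1}}, aₙ) ≤ n·Δ₁·Δ_{n−1}, where Δ₁ is the largest absolute value of an entry of Ã and Δ_{n−1} is the largest absolute value of a sub-determinant of Ã of size n−1. -/

import Mathlib

open scoped RealInnerProductSpace BigOperators
open MeasureTheory ProbabilityTheory Matrix

noncomputable section

/-- Identity map from plain vectors to Euclidean space (L2 norm). -/
def toE {n : ℕ} (x : Fin n → ℝ) : EuclideanSpace ℝ (Fin n) := WithLp.toLp 2 x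

/-- Identity map from Euclidean space to plain vectors. -/
def ofE {n : ℕ} (x : EuclideanSpace ℝ (Fin n)) : Fin n → ℝ := x

/-- Normalization N(x) = x / ‖x‖. -/
def nrm {n : ℕ} (x : EuclideanSpace ℝ (Fin n)) : EuclideanSpace ℝ (Fin n) := ‖x‖⁻¹ • x

/-- δ̂(S, v): the norm of the projection of v onto the orthogonal complement of span S,
divided by ‖v‖ (the sine of the angle between v and span S). -/
def deltaHat {n : ℕ} (S : Set (EuclideanSpace ℝ (Fin n))) (v : EuclideanSpace ℝ (Fin n)) : ℝ :=
  ‖(Submodule.orthogonalProjection ((Submodule.span ℝ S)ᗮ) v : EuclideanSpace ℝ (Fin n))‖ / ‖v‖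

/-- δ(z₁, …, zₙ) = min over k of δ̂({z_i : i ≠ k}, z_k). -/
def deltaVec {n : ℕ} (z : Fin n → EuclideanSpace ℝ (Fin n)) : ℝ :=
  ⨅ k : Fin n, deltaHat (z '' {i | i ≠ k}) (z k)

/-- δ(A) for rows a₁, …, a_m: the minimum of δ over all choices of n linearly
independent rows. -/
def deltaRows {m n : ℕ} (a : Fin m → EuclideanSpace ℝ (Fin n)) : ℝ :=
  sInf { d | ∃ f : Fin n → Fin m, LinearIndependent ℝ (a ∘ f) ∧ d = deltaVec (a ∘ f) }

/-- A vertex of the polyhedron {x : ∀ i, ⟪a i, x⟫ ≤ b i}. -/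
def IsVertex {m n : ℕ} (a : Fin m → EuclideanSpace ℝ (Fin n)) (b : Fin m → ℝ)
    (z : EuclideanSpace ℝ (Fin n)) : Prop :=
  (∀ i, ⟪a i, z⟫ ≤ b i) ∧ Submodule.span ℝ (a '' {i | ⟪a i, z⟫ = b i}) = ⊤

/-- Two distinct vertices are neighboring if n−1 linearly independent constraints are
tight at both. -/
def Neighboring {m n : ℕ} (a : Fin m → EuclideanSpace ℝ (Fin n)) (b : Fin m → ℝ)
    (z₁ z₂ : EuclideanSpace ℝ (Fin n)) : Prop :=
  IsVertex a b z₁ ∧ IsVertex a b z₂ ∧ z₁ ≠ z₂ ∧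
    ∃ s : Finset (Fin m), s.card = n - 1 ∧
      LinearIndependent ℝ (fun i : s => a i) ∧
      ∀ i ∈ s, ⟪a i, z₁⟫ = b i ∧ ⟪a i, z₂⟫ = b i

/-- The largest absolute value of a sub-determinant of size k. -/
def subdetSup {m n : ℕ} (A : Matrix (Fin m) (Fin n) ℝ) (k : ℕ) : ℝ :=
  ⨆ (f : Fin k → Fin m) (_ : Function.Injective f) (g : Fin k → Fin n)
    (_ : Function.Injective g), |(A.submatrix f g).det|

end


lemma le_subdetSup {m n k : ℕ} (A : Matrix (Fin m) (Fin n) ℝ)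
    {f : Fin k → Fin m} (hf : Function.Injective f) {g : Fin k → Fin n}
    (hg : Function.Injective g) : |(A.submatrix f g).det| ≤ subdetSup A k := by
  unfold subdetSup
  have h1 : |(A.submatrix f g).det|
      ≤ ⨆ (g : Fin k → Fin n) (_ : Function.Injective g), |(A.submatrix f g).det| := by
    rw [show |(A.submatrix f g).det| = ⨆ (_ : Function.Injective g), |(A.submatrix f g).det|
      from (ciSup_pos (f := fun _ : Function.Injective g => |(A.submatrix f g).det|) hg).symm]
    exact le_ciSup (f := fun g' : Fin k → Fin n =>
      ⨆ (_ : Function.Injective g'), |(A.submatrix f g').det|)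
      (Set.Finite.bddAbove (Set.finite_range _)) g
  refine h1.trans ?_
  rw [show (⨆ (g : Fin k → Fin n) (_ : Function.Injective g), |(A.submatrix f g).det|)
      = ⨆ (_ : Function.Injective f) (g : Fin k → Fin n) (_ : Function.Injective g),
        |(A.submatrix f g).det| from (ciSup_pos (f := fun _ : Function.Injective f =>
          ⨆ (g : Fin k → Fin n) (_ : Function.Injective g), |(A.submatrix f g).det|) hf).symm]
  exact le_ciSup (f := fun f' : Fin k → Fin m =>
      ⨆ (_ : Function.Injective f') (g : Fin k → Fin n) (_ : Function.Injective g),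
        |(A.submatrix f' g).det|)
    (Set.Finite.bddAbove (Set.finite_range _)) f

/-- For linearly independent integer vectors a₁, …, a_{n+1} ∈ ℤ^{n+1} with
Ã the matrix whose rows are a₁ᵀ, …, a_{n+1}ᵀ,
1/δ̂({a₁,…,aₙ}, a_{n+1}) ≤ (n+1)·Δ₁·Δₙ, where Δ₁ is the largest absolute value of an
entry of Ã and Δₙ the largest absolute value of a sub-determinant of Ã of size n = (n+1)−1. -/
theorem stmt6 {n : ℕ} (a : Fin (n+1) → (Fin (n+1) → ℤ))
    (hli : LinearIndependent ℝ fun i => toE fun j => ((a i j : ℝ))) :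
    1 / deltaHat ((fun i => toE fun j => ((a i j : ℝ))) '' {i | i ≠ Fin.last n})
          (toE fun j => ((a (Fin.last n) j : ℝ))) ≤
      ((n : ℝ) + 1) * subdetSup (Matrix.of fun i j => ((a i j : ℝ))) 1 *
        subdetSup (Matrix.of fun i j => ((a i j : ℝ))) n := by
  classical
  set A : Matrix (Fin (n+1)) (Fin (n+1)) ℝ := Matrix.of fun i j => ((a i j : ℝ)) with hA
  set v : EuclideanSpace ℝ (Fin (n+1)) := toE fun j => ((a (Fin.last n) j : ℝ)) with hv
  set S : Set (EuclideanSpace ℝ (Fin (n+1))) :=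
    (fun i => toE fun j => ((a i j : ℝ))) '' {i | i ≠ Fin.last n} with hS
  set W : Submodule ℝ (EuclideanSpace ℝ (Fin (n+1))) := Submodule.span ℝ S with hW
  set p : EuclideanSpace ℝ (Fin (n+1)) :=
    (Submodule.orthogonalProjection Wᗮ v : EuclideanSpace ℝ (Fin (n+1))) with hp
  -- determinant is a nonzero integer
  have hdetne : A.det ≠ 0 := by
    have : LinearIndependent ℝ (fun i => A i) :=
      hli.map' (WithLp.linearEquiv 2 ℝ (Fin (n+1) → ℝ)).toLinearMap (LinearEquiv.ker _)
    have := Matrix.linearIndependent_rows_iff_isUnit.mp this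
    rw [Matrix.isUnit_iff_isUnit_det] at this
    exact this.ne_zero
  have hdet1 : (1 : ℝ) ≤ |A.det| := by
    have hcast : A.det = ((Matrix.of fun i j => a i j : Matrix (Fin (n+1)) (Fin (n+1)) ℤ).det : ℝ) := by
      have h := RingHom.map_det (Int.castRingHom ℝ) (Matrix.of fun i j => a i j)
      have h2 : A = ((Int.castRingHom ℝ).mapMatrix (Matrix.of fun i j => a i j)) := rfl
      rw [h2, ← h]
      rfl
    rw [hcast] at hdetne ⊢
    rw [← Int.cast_abs]
    exact_mod_cast Int.one_le_abs (by exact_mod_cast hdetne)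
  -- the cofactor vector
  set c : EuclideanSpace ℝ (Fin (n+1)) := toE fun j => A.adjugate j (Fin.last n) with hc
  have hinner : ∀ i, ⟪toE fun j => ((a i j : ℝ)), c⟫ = if i = Fin.last n then A.det else 0 := by
    intro i
    have : ⟪toE fun j => ((a i j : ℝ)), c⟫ = (A * A.adjugate) i (Fin.last n) := by
      rw [Matrix.mul_apply]
      simp [PiLp.inner_apply, c, toE, A, mul_comm]
    rw [this, Matrix.mul_adjugate]
    simp [Matrix.one_apply]
  have hcW : c ∈ Wᗮ := by
    rw [Submodule.mem_orthogonal]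
    intro u hu
    induction hu using Submodule.span_induction with
    | mem x hx =>
      obtain ⟨i, hi, rfl⟩ := hx
      rw [hinner i, if_neg hi]
    | zero => simp
    | add x y _ _ hx hy => rw [inner_add_left, hx, hy, add_zero]
    | smul t x _ hx => rw [inner_smul_left, hx, mul_zero]
  have hvc : ⟪v, c⟫ = A.det := by rw [hv, hinner, if_pos rfl]
  have hvpW : v - p ∈ W := by
    have h1 : v - p ∈ Wᗮᗮ := Submodule.sub_starProjection_mem_orthogonal (K := Wᗮ) v
    rwa [Submodule.orthogonal_orthogonal] at h1
  have hpc : ⟪p, c⟫ = A.det := by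
    have h0 : ⟪v - p, c⟫ = 0 := Submodule.inner_right_of_mem_orthogonal hvpW hcW
    rw [inner_sub_left] at h0
    linarith [hvc]
  have hpcle : (1 : ℝ) ≤ ‖p‖ * ‖c‖ := by
    calc (1 : ℝ) ≤ |A.det| := hdet1
    _ = |⟪p, c⟫| := by rw [hpc]
    _ ≤ ‖p‖ * ‖c‖ := abs_real_inner_le_norm p c
  have hpnorm : 0 < ‖p‖ := by
    by_contra h
    push_neg at h
    have : ‖p‖ = 0 := le_antisymm h (norm_nonneg _)
    rw [this, zero_mul] at hpcle; linarith
  -- entry bounds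
  have hD1 : ∀ i j, |(a i j : ℝ)| ≤ subdetSup A 1 := by
    intro i j
    have := le_subdetSup A (f := fun _ : Fin 1 => i) (g := fun _ : Fin 1 => j)
      (Function.injective_of_subsingleton _) (Function.injective_of_subsingleton _)
    simpa [Matrix.det_fin_one, A] using this
  have hDn : ∀ j, |c j| ≤ subdetSup A n := by
    intro j
    have hadj : |A.adjugate j (Fin.last n)|
        = |(A.submatrix (Fin.last n).succAbove j.succAbove).det| := by
      rw [Matrix.adjugate_fin_succ_eq_det_submatrix, abs_mul, abs_pow, abs_neg, abs_one,
        one_pow, one_mul]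
    rw [show c j = A.adjugate j (Fin.last n) from rfl, hadj]
    exact le_subdetSup A (Fin.succAbove_right_injective) (Fin.succAbove_right_injective)
  have hD1nonneg : (0:ℝ) ≤ subdetSup A 1 := (abs_nonneg _).trans (hD1 0 0)
  have hDnnonneg : (0:ℝ) ≤ subdetSup A n := (abs_nonneg _).trans (hDn 0)
  -- norm bounds
  have hnormv : ‖v‖ ≤ Real.sqrt (n+1) * subdetSup A 1 := by
    rw [EuclideanSpace.norm_eq]
    rw [show Real.sqrt (n+1) * subdetSup A 1 = Real.sqrt ((n+1) * (subdetSup A 1)^2) by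
      rw [Real.sqrt_mul (by positivity), Real.sqrt_sq hD1nonneg]]
    apply Real.sqrt_le_sqrt
    calc ∑ j, ‖v j‖^2 ≤ ∑ _j : Fin (n+1), (subdetSup A 1)^2 := by
          apply Finset.sum_le_sum
          intro j _
          have := hD1 (Fin.last n) j
          have h2 : ‖v j‖ = |(a (Fin.last n) j : ℝ)| := by
            simp [v, toE, Real.norm_eq_abs]
          rw [h2]
          exact pow_le_pow_left₀ (abs_nonneg _) this 2
      _ = (n+1) * (subdetSup A 1)^2 := by
          rw [Finset.sum_const, Finset.card_univ]
          simp [mul_comm]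
  have hnormc : ‖c‖ ≤ Real.sqrt (n+1) * subdetSup A n := by
    rw [EuclideanSpace.norm_eq]
    rw [show Real.sqrt (n+1) * subdetSup A n = Real.sqrt ((n+1) * (subdetSup A n)^2) by
      rw [Real.sqrt_mul (by positivity), Real.sqrt_sq hDnnonneg]]
    apply Real.sqrt_le_sqrt
    calc ∑ j, ‖c j‖^2 ≤ ∑ _j : Fin (n+1), (subdetSup A n)^2 := by
          apply Finset.sum_le_sum
          intro j _
          rw [Real.norm_eq_abs]
          exact pow_le_pow_left₀ (abs_nonneg _) (hDn j) 2
      _ = (n+1) * (subdetSup A n)^2 := by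
          rw [Finset.sum_const, Finset.card_univ]
          simp [mul_comm]
  -- conclude
  have hdh : deltaHat S v = ‖p‖ / ‖v‖ := rfl
  rw [hdh, one_div_div]
  have key : ‖v‖ / ‖p‖ ≤ ‖v‖ * ‖c‖ := by
    rw [div_le_iff₀ hpnorm]
    calc ‖v‖ = ‖v‖ * 1 := by ring
      _ ≤ ‖v‖ * (‖p‖ * ‖c‖) := by
          apply mul_le_mul_of_nonneg_left hpcle (norm_nonneg _)
      _ = ‖v‖ * ‖c‖ * ‖p‖ := by ring
  refine key.trans ?_
  have hs : Real.sqrt (n+1) * Real.sqrt (n+1) = (n:ℝ)+1 :=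
    Real.mul_self_sqrt (by positivity)
  calc ‖v‖ * ‖c‖ ≤ (Real.sqrt (n+1) * subdetSup A 1) * (Real.sqrt (n+1) * subdetSup A n) :=
        mul_le_mul hnormv hnormc (norm_nonneg _) (by positivity)
    _ = (Real.sqrt (n+1) * Real.sqrt (n+1)) * subdetSup A 1 * subdetSup A n := by ring
    _ = ((n:ℝ)+1) * subdetSup A 1 * subdetSup A n := by rw [hs]
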